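/- arXiv:2312.06006 — 2 statements merged into one kernel-verified Lean document; each statement's English description precedes it below -/
import Mathlib

section
/- The function Z₁(u) = u/√2 − (u²/(2Γ(3/4))) · ₁F₃(1/4; 3/4, 5/4, 3/2; u⁴/256) + (u³/(6√2 Γ(1/2))) · ₁F₃(1/2; 5/4, 3/2, 7/4; u⁴/256) satisfies the fourth-order linear ordinary differential equation Z⁗(u) − (1/4) u Z′(u) + (1/4) Z(u) = 0 for every u ∈ ℝ. -/
set_option maxHeartbeats 1000000

/-- Pochhammer symbol (rising factorial) `(a)_k = a(a+1)⋯(a+k-1)`. -/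
noncomputable def poch (a : ℝ) (k : ℕ) : ℝ := ∏ i ∈ Finset.range k, (a + (i : ℝ))

/-- Generalized hypergeometric function `₁F₃(a; b₁, b₂, b₃; z)`. -/
noncomputable def F13 (a b₁ b₂ b₃ z : ℝ) : ℝ :=
  ∑' k : ℕ, poch a k / (poch b₁ k * poch b₂ k * poch b₃ k) * z ^ k / (Nat.factorial k)

/-- The similarity solution `Z₁` of Mullins' equation. -/
noncomputable def Z₁ (u : ℝ) : ℝ :=
  u / Real.sqrt 2
  - u ^ 2 / (2 * Real.Gamma (3/4)) * F13 (1/4) (3/4) (5/4) (3/2) (u ^ 4 / 256)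
  + u ^ 3 / (6 * Real.sqrt 2 * Real.Gamma (1/2)) * F13 (1/2) (5/4) (3/2) (7/4) (u ^ 4 / 256)

namespace MullinsAux

/-- coefficient sequence of the power series of `Z₁`. -/
noncomputable def cc : ℕ → ℝ
  | 0 => 0
  | 1 => 1 / Real.sqrt 2
  | 2 => -(1 / (2 * Real.Gamma (3/4)))
  | 3 => 1 / (6 * Real.sqrt 2 * Real.Gamma (1/2))
  | (n+4) =>
      ((n : ℝ) - 1) / (4 * ((n : ℝ) + 1) * ((n : ℝ) + 2) * ((n : ℝ) + 3) * ((n : ℝ) + 4)) * cc n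

lemma cc_add_four (n : ℕ) :
    cc (n + 4) =
      ((n : ℝ) - 1) / (4 * ((n : ℝ) + 1) * ((n : ℝ) + 2) * ((n : ℝ) + 3) * ((n : ℝ) + 4)) * cc n :=
  rfl

noncomputable def K : ℝ := |cc 1| + |cc 2| + |cc 3|

lemma abs_cc_le (n : ℕ) : |cc n| ≤ K / (Nat.factorial (n/4) : ℝ) := by
  induction n using Nat.strong_induction_on with
  | _ n ih =>
    rcases n with _ | _ | _ | _ | m
    · simp only [cc, abs_zero, K]
      positivity
    · have : (1:ℕ)/4 = 0 := by norm_num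
      rw [this]
      simp only [Nat.factorial_zero, Nat.cast_one, div_one, K]
      nlinarith [abs_nonneg (cc 2), abs_nonneg (cc 3)]
    · have : (2:ℕ)/4 = 0 := by norm_num
      rw [this]
      simp only [Nat.factorial_zero, Nat.cast_one, div_one, K]
      nlinarith [abs_nonneg (cc 1), abs_nonneg (cc 3)]
    · have : (3:ℕ)/4 = 0 := by norm_num
      rw [this]
      simp only [Nat.factorial_zero, Nat.cast_one, div_one, K]
      nlinarith [abs_nonneg (cc 1), abs_nonneg (cc 2)]
    · have ihm := ih m (by omega)
      have hm4 : (m + 4) / 4 = m / 4 + 1 := Nat.add_div_right m (by norm_num)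
      have hqm : ((m / 4 : ℕ) : ℝ) ≤ (m : ℝ) := by exact_mod_cast Nat.div_le_self m 4
      have hm0 : (0:ℝ) ≤ (m:ℝ) := Nat.cast_nonneg m
      have hden : (0:ℝ) < 4 * ((m : ℝ) + 1) * ((m : ℝ) + 2) * ((m : ℝ) + 3) * ((m : ℝ) + 4) := by
        positivity
      have hfq : (0:ℝ) < (Nat.factorial (m/4) : ℝ) := by
        exact_mod_cast (m/4).factorial_pos
      have hK : 0 ≤ K := by
        have := abs_nonneg (cc 1); have := abs_nonneg (cc 2); have := abs_nonneg (cc 3)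
        unfold K; linarith
      have key : |cc (m + 4)| ≤ (1 / (((m/4 : ℕ) : ℝ) + 1)) * (K / (Nat.factorial (m/4) : ℝ)) := by
        rw [cc_add_four, abs_mul, abs_div, abs_of_pos hden]
        refine mul_le_mul ?_ ihm (abs_nonneg _) (by positivity)
        rw [div_le_div_iff₀ hden (by positivity)]
        have habs : |(m:ℝ) - 1| ≤ (m:ℝ) + 1 := by
          rw [abs_le]; constructor <;> nlinarith
        have h1 : |(m:ℝ) - 1| * (((m/4 : ℕ) : ℝ) + 1) ≤ ((m:ℝ) + 1) * ((m:ℝ) + 1) :=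
          mul_le_mul habs (by linarith) (by positivity) (by linarith)
        nlinarith [h1]
      show |cc (m + 4)| ≤ K / (Nat.factorial ((m+4)/4) : ℝ)
      rw [hm4, Nat.factorial_succ]
      calc |cc (m+4)| ≤ (1 / (((m/4 : ℕ) : ℝ) + 1)) * (K / (Nat.factorial (m/4) : ℝ)) := key
        _ = K / ((((m/4 : ℕ) : ℝ) + 1) * (Nat.factorial (m/4) : ℝ)) := by
            field_simp
        _ = K / (((m/4 + 1) * Nat.factorial (m/4) : ℕ) : ℝ) := by push_cast; ring_nf

/-- growth predicate ensuring termwise differentiation works everywhere -/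
def Good (c : ℕ → ℝ) : Prop := ∀ R : ℝ, 1 ≤ R → Summable fun n => |c n| * R ^ n

/-- shift operator on coefficients corresponding to differentiation -/
noncomputable def DD (c : ℕ → ℝ) : ℕ → ℝ := fun n => ((n : ℝ) + 1) * c (n + 1)

/-- sum of the power series with coefficients `c` -/
noncomputable def SS (c : ℕ → ℝ) : ℝ → ℝ := fun y => ∑' n, c n * y ^ n

lemma good_cc : Good cc := by
  intro R hR
  have hR0 : (0:ℝ) < R := lt_of_lt_of_le one_pos hR
  have hK : 0 ≤ K := by
    have := abs_nonneg (cc 1); have := abs_nonneg (cc 2); have := abs_nonneg (cc 3)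
    unfold K; linarith
  have hbase : Summable (fun k : ℕ => K * R ^ 3 * ((R ^ 4) ^ k / (Nat.factorial k : ℝ))) :=
    (Real.summable_pow_div_factorial (R ^ 4)).mul_left _
  have hone : Summable (fun _ : Fin 4 => (1:ℝ)) := .of_finite
  have hprod := hbase.mul_of_nonneg hone (fun k => by positivity) (fun r => by norm_num)
  have hcomp : Summable (fun n : ℕ => K * R ^ 3 * ((R ^ 4) ^ (n / 4) / (Nat.factorial (n/4) : ℝ))) := by
    have h := (Equiv.summable_iff (Nat.divModEquiv 4)).mpr hprod
    simpa [Function.comp_def, Nat.divModEquiv_apply] using h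
  apply Summable.of_nonneg_of_le (fun n => by positivity) _ hcomp
  intro n
  have hfq : (0:ℝ) < (Nat.factorial (n/4) : ℝ) := by exact_mod_cast (n/4).factorial_pos
  have hmod : n % 4 ≤ 3 := by omega
  have hn : 4 * (n/4) + n % 4 = n := Nat.div_add_mod n 4
  have hRm : R ^ (n % 4) ≤ R ^ 3 := pow_le_pow_right₀ hR hmod
  calc |cc n| * R ^ n ≤ (K / (Nat.factorial (n/4) : ℝ)) * R ^ n :=
        mul_le_mul_of_nonneg_right (abs_cc_le n) (by positivity)
    _ = K * ((R ^ 4) ^ (n/4) * R ^ (n % 4)) / (Nat.factorial (n/4) : ℝ) := by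
        rw [show R ^ n = (R ^ 4) ^ (n/4) * R ^ (n % 4) by rw [← pow_mul, ← pow_add, hn]]
        ring
    _ ≤ K * ((R ^ 4) ^ (n/4) * R ^ 3) / (Nat.factorial (n/4) : ℝ) := by gcongr
    _ = K * R ^ 3 * ((R ^ 4) ^ (n/4) / (Nat.factorial (n/4) : ℝ)) := by ring

lemma good_DD {c : ℕ → ℝ} (h : Good c) : Good (DD c) := by
  intro R hR
  have hR0 : (0:ℝ) < R := lt_of_lt_of_le one_pos hR
  have h2 : Summable (fun n => |c (n+1)| * (2*R) ^ (n+1)) :=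
    (summable_nat_add_iff 1).mpr (h (2*R) (by linarith))
  apply Summable.of_nonneg_of_le (fun n => by positivity) _ h2
  intro n
  have h1 : ((n:ℝ) + 1) ≤ 2 ^ (n+1) := by
    have h2n : (n:ℝ) < 2 ^ n := by exact_mod_cast Nat.lt_two_pow_self (n := n)
    have hp : (1:ℝ) ≤ 2 ^ n := one_le_pow₀ one_le_two
    have : (2:ℝ) ^ (n+1) = 2 * 2 ^ n := by ring
    nlinarith
  have hRn : R ^ n ≤ R ^ (n+1) := pow_le_pow_right₀ hR (Nat.le_succ n)
  calc |DD c n| * R ^ n = ((n:ℝ) + 1) * |c (n+1)| * R ^ n := by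
        rw [DD, abs_mul, abs_of_pos (by positivity : (0:ℝ) < (n:ℝ) + 1)]
    _ ≤ 2 ^ (n+1) * |c (n+1)| * R ^ (n+1) :=
        mul_le_mul (mul_le_mul h1 le_rfl (abs_nonneg _) (by positivity)) hRn (by positivity)
          (by positivity)
    _ = |c (n+1)| * (2*R) ^ (n+1) := by rw [mul_pow]; ring

lemma summable_SS {c : ℕ → ℝ} (h : Good c) (u : ℝ) : Summable fun n => c n * u ^ n := by
  have hu : (0:ℝ) ≤ |u| := abs_nonneg u
  have hs := h (|u| + 1) (by linarith)
  apply Summable.of_abs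
  apply Summable.of_nonneg_of_le (fun n => abs_nonneg _) _ hs
  intro n
  rw [abs_mul, abs_pow]
  exact mul_le_mul_of_nonneg_left (pow_le_pow_left₀ hu (by linarith) n) (abs_nonneg _)

lemma hasDerivAt_SS {c : ℕ → ℝ} (h : Good c) (x : ℝ) :
    HasDerivAt (SS c) (SS (DD c) x) x := by
  set R : ℝ := |x| + 1 with hRdef
  have hx0 : (0:ℝ) ≤ |x| := abs_nonneg x
  have hR1 : 1 ≤ R := by rw [hRdef]; linarith
  have hR0 : (0:ℝ) < R := by linarith
  have hu : Summable (fun n => |c n| * (2*R) ^ n) := h (2*R) (by linarith)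
  have hbnd : ∀ (n : ℕ), ∀ y ∈ Metric.ball (0:ℝ) R,
      ‖c n * ((n:ℝ) * y ^ (n-1))‖ ≤ |c n| * (2*R) ^ n := by
    intro n y hy
    have hy' : |y| < R := by simpa [Real.dist_eq] using hy
    have h2n : ((n:ℝ)) ≤ 2 ^ n := by
      exact_mod_cast (Nat.lt_two_pow_self (n := n)).le
    have hyp : |y| ^ (n-1) ≤ R ^ n :=
      le_trans (pow_le_pow_left₀ (abs_nonneg y) hy'.le _)
        (pow_le_pow_right₀ hR1 (Nat.sub_le n 1))
    calc ‖c n * ((n:ℝ) * y ^ (n-1))‖ = |c n| * ((n:ℝ) * |y| ^ (n-1)) := by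
          rw [Real.norm_eq_abs, abs_mul, abs_mul, abs_pow, Nat.abs_cast]
      _ ≤ |c n| * (2 ^ n * R ^ n) :=
          mul_le_mul_of_nonneg_left
            (mul_le_mul h2n hyp (by positivity) (by positivity)) (abs_nonneg _)
      _ = |c n| * (2*R) ^ n := by rw [mul_pow]
  have hderiv := hasDerivAt_tsum_of_isPreconnected hu Metric.isOpen_ball
      ((convex_ball (0:ℝ) R).isPreconnected)
      (g := fun (n : ℕ) (y : ℝ) => c n * y ^ n)
      (g' := fun (n : ℕ) (y : ℝ) => c n * ((n:ℝ) * y ^ (n-1)))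
      (fun n y _ => (hasDerivAt_pow n y).const_mul (c n))
      (fun n y hy => hbnd n y hy)
      (Metric.mem_ball_self hR0)
      (summable_SS h 0)
      (by simpa [Real.dist_eq] using (by linarith : |x| < R))
  have hs' : Summable (fun n => c n * ((n:ℝ) * x ^ (n-1))) :=
    Summable.of_norm_bounded hu
      (fun n => hbnd n x (by simpa [Real.dist_eq] using (by linarith : |x| < R)))
  have hval : (∑' n, c n * ((n:ℝ) * x ^ (n-1))) = SS (DD c) x := by
    rw [Summable.tsum_eq_zero_add hs']
    simp only [Nat.cast_zero, zero_mul, mul_zero, zero_add]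
    apply tsum_congr; intro n
    simp only [DD, Nat.add_sub_cancel]
    push_cast
    ring
  rw [hval] at hderiv
  exact hderiv

lemma deriv_SS {c : ℕ → ℝ} (h : Good c) : deriv (SS c) = SS (DD c) :=
  funext fun x => (hasDerivAt_SS h x).deriv

lemma iteratedDeriv_four {c : ℕ → ℝ} (h : Good c) :
    iteratedDeriv 4 (SS c) = SS (DD (DD (DD (DD c)))) := by
  have h1 := good_DD h
  have h2 := good_DD h1
  have h3 := good_DD h2
  rw [show (4:ℕ) = 0+1+1+1+1 from rfl, iteratedDeriv_succ, iteratedDeriv_succ,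
    iteratedDeriv_succ, iteratedDeriv_succ, iteratedDeriv_zero, deriv_SS h, deriv_SS h1,
    deriv_SS h2, deriv_SS h3]

lemma poch_succ (a : ℝ) (k : ℕ) : poch a (k+1) = poch a k * (a + k) :=
  Finset.prod_range_succ _ _

lemma poch_pos {a : ℝ} (ha : 0 < a) (k : ℕ) : 0 < poch a k :=
  Finset.prod_pos fun i _ => by positivity

lemma cc_four_mul (k : ℕ) : cc (4*k) = 0 := by
  induction k with
  | zero => rfl
  | succ k ih =>
    rw [show 4*(k+1) = 4*k+4 by ring, cc_add_four, ih, mul_zero]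

lemma cc_aux1 (k : ℕ) : cc (4*k+5) = 0 := by
  induction k with
  | zero =>
    rw [show 4*0+5 = 1+4 by norm_num, cc_add_four]
    norm_num
  | succ k ih =>
    rw [show 4*(k+1)+5 = (4*k+5)+4 by ring, cc_add_four, ih, mul_zero]

lemma cc_4k2 (k : ℕ) :
    cc (4*k+2) = cc 2 *
      (poch (1/4) k / (poch (3/4) k * poch (5/4) k * poch (3/2) k) / 256^k /
        (Nat.factorial k : ℝ)) := by
  induction k with
  | zero => norm_num [poch]
  | succ k ih =>
    have hb1 := (poch_pos (by norm_num : (0:ℝ) < 3/4) k).ne'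
    have hb2 := (poch_pos (by norm_num : (0:ℝ) < 5/4) k).ne'
    have hb3 := (poch_pos (by norm_num : (0:ℝ) < 3/2) k).ne'
    have hfk : ((Nat.factorial k : ℝ)) ≠ 0 := by
      exact_mod_cast k.factorial_pos.ne'
    have h256 : ((256:ℝ))^k ≠ 0 := by positivity
    have hk0 : (0:ℝ) ≤ (k:ℝ) := Nat.cast_nonneg k
    rw [show 4*(k+1)+2 = (4*k+2)+4 by ring, cc_add_four, ih,
      poch_succ, poch_succ, poch_succ, poch_succ, Nat.factorial_succ, pow_succ]
    push_cast
    field_simp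
    ring

lemma cc_4k3 (k : ℕ) :
    cc (4*k+3) = cc 3 *
      (poch (1/2) k / (poch (5/4) k * poch (3/2) k * poch (7/4) k) / 256^k /
        (Nat.factorial k : ℝ)) := by
  induction k with
  | zero => norm_num [poch]
  | succ k ih =>
    have hb1 := (poch_pos (by norm_num : (0:ℝ) < 5/4) k).ne'
    have hb2 := (poch_pos (by norm_num : (0:ℝ) < 3/2) k).ne'
    have hb3 := (poch_pos (by norm_num : (0:ℝ) < 7/4) k).ne'
    have hfk : ((Nat.factorial k : ℝ)) ≠ 0 := by
      exact_mod_cast k.factorial_pos.ne'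
    have h256 : ((256:ℝ))^k ≠ 0 := by positivity
    have hk0 : (0:ℝ) ≤ (k:ℝ) := Nat.cast_nonneg k
    rw [show 4*(k+1)+3 = (4*k+3)+4 by ring, cc_add_four, ih,
      poch_succ, poch_succ, poch_succ, poch_succ, Nat.factorial_succ, pow_succ]
    push_cast
    field_simp
    ring

lemma cc_one : cc 1 = 1 / Real.sqrt 2 := rfl
lemma cc_two : cc 2 = -(1 / (2 * Real.Gamma (3/4))) := rfl
lemma cc_three : cc 3 = 1 / (6 * Real.sqrt 2 * Real.Gamma (1/2)) := rfl

lemma Z1_eq (u : ℝ) : Z₁ u = SS cc u := by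
  have hs : Summable (fun n => cc n * u ^ n) := summable_SS good_cc u
  have hps : Summable (fun p : ℕ × Fin 4 =>
      cc (p.1 * 4 + (p.2 : ℕ)) * u ^ (p.1 * 4 + (p.2 : ℕ))) := by
    have h := (Equiv.summable_iff (Nat.divModEquiv 4).symm).mpr hs
    simpa [Function.comp_def, Nat.divModEquiv] using h
  have h1 : SS cc u = ∑' p : ℕ × Fin 4,
      cc (p.1 * 4 + (p.2 : ℕ)) * u ^ (p.1 * 4 + (p.2 : ℕ)) := by
    rw [SS, ← (Nat.divModEquiv 4).symm.tsum_eq (fun n => cc n * u ^ n)]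
    apply tsum_congr; intro p
    simp [Nat.divModEquiv]
  have h2 : ∀ b : ℕ, (∑' r : Fin 4, cc (b * 4 + (r : ℕ)) * u ^ (b * 4 + (r : ℕ)))
      = cc (4*b+1) * u ^ (4*b+1) + cc (4*b+2) * u ^ (4*b+2) + cc (4*b+3) * u ^ (4*b+3) := by
    intro b
    rw [tsum_fintype, Fin.sum_univ_four]
    norm_num [show ((0:Fin 4):ℕ) = 0 from rfl, show ((1:Fin 4):ℕ) = 1 from rfl,
      show ((2:Fin 4):ℕ) = 2 from rfl, show ((3:Fin 4):ℕ) = 3 from rfl,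
      show b*4 = 4*b by ring, show b*4+1 = 4*b+1 by ring,
      show b*4+2 = 4*b+2 by ring, show b*4+3 = 4*b+3 by ring, cc_four_mul]
  have hA : Summable (fun b : ℕ => cc (4*b+1) * u ^ (4*b+1)) :=
    hs.comp_injective (fun a b h => by omega)
  have hB : Summable (fun b : ℕ => cc (4*b+2) * u ^ (4*b+2)) :=
    hs.comp_injective (fun a b h => by omega)
  have hC : Summable (fun b : ℕ => cc (4*b+3) * u ^ (4*b+3)) :=
    hs.comp_injective (fun a b h => by omega)
  have hSA : (∑' b : ℕ, cc (4*b+1) * u ^ (4*b+1)) = u / Real.sqrt 2 := by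
    rw [tsum_eq_single 0 ?_]
    · rw [show 4*0+1 = 1 by norm_num, cc_one, pow_one]; ring
    · intro b hb
      obtain ⟨j, rfl⟩ : ∃ j, b = j + 1 := ⟨b - 1, by omega⟩
      rw [show 4*(j+1)+1 = 4*j+5 by ring, cc_aux1, zero_mul]
  have hSB : (∑' b : ℕ, cc (4*b+2) * u ^ (4*b+2))
      = (cc 2 * u^2) * F13 (1/4) (3/4) (5/4) (3/2) (u^4/256) := by
    rw [F13, ← tsum_mul_left]
    apply tsum_congr; intro k
    have hfk : ((Nat.factorial k : ℝ)) ≠ 0 := by exact_mod_cast k.factorial_pos.ne'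
    rw [cc_4k2, div_pow, ← pow_mul, pow_add]
    ring
  have hSC : (∑' b : ℕ, cc (4*b+3) * u ^ (4*b+3))
      = (cc 3 * u^3) * F13 (1/2) (5/4) (3/2) (7/4) (u^4/256) := by
    rw [F13, ← tsum_mul_left]
    apply tsum_congr; intro k
    rw [cc_4k3, div_pow, ← pow_mul, pow_add]
    ring
  have key : SS cc u = u / Real.sqrt 2
      + (cc 2 * u^2) * F13 (1/4) (3/4) (5/4) (3/2) (u^4/256)
      + (cc 3 * u^3) * F13 (1/2) (5/4) (3/2) (7/4) (u^4/256) := by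
    rw [h1, Summable.tsum_prod' hps (fun b => Summable.of_finite), tsum_congr h2,
      Summable.tsum_add (hA.add hB) hC, Summable.tsum_add hA hB, hSA, hSB, hSC]
  rw [key, Z₁, cc_two, cc_three]
  ring

end MullinsAux

/-- `Z₁` satisfies the similarity ODE `Z⁗(u) - (1/4) u Z'(u) + (1/4) Z(u) = 0` on all of `ℝ`. -/
theorem Z₁_satisfies_similarity_ODE (u : ℝ) :
    iteratedDeriv 4 Z₁ u - 1/4 * u * deriv Z₁ u + 1/4 * Z₁ u = 0 := by
  open MullinsAux in
  have hZ : Z₁ = SS cc := funext Z1_eq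
  have g0 := good_cc
  have g1 := good_DD g0
  have g2 := good_DD g1
  have g3 := good_DD g2
  have g4 := good_DD g3
  have hm : Summable (fun n : ℕ => (n:ℝ) * cc n * u ^ n) := by
    have hu0 : (0:ℝ) ≤ |u| := abs_nonneg u
    have hgs := g0 (2*(|u|+1)) (by linarith)
    apply Summable.of_abs
    apply Summable.of_nonneg_of_le (fun n => abs_nonneg _) _ hgs
    intro n
    have h2n : ((n:ℝ)) ≤ 2 ^ n := by exact_mod_cast (Nat.lt_two_pow_self (n := n)).le
    calc |(n:ℝ) * cc n * u ^ n| = (n:ℝ) * |cc n| * |u| ^ n := by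
          rw [abs_mul, abs_mul, abs_pow, Nat.abs_cast]
      _ ≤ 2 ^ n * |cc n| * (|u|+1) ^ n := by
          refine mul_le_mul (mul_le_mul_of_nonneg_right h2n (abs_nonneg _))
            (pow_le_pow_left₀ hu0 (by linarith) n) (by positivity) (by positivity)
      _ = |cc n| * (2*(|u|+1)) ^ n := by rw [mul_pow]; ring
  have hS4 : Summable (fun n => DD (DD (DD (DD cc))) n * u ^ n) := summable_SS g4 u
  have hS0 : Summable (fun n => cc n * u ^ n) := summable_SS g0 u
  have hmid : u * SS (DD cc) u = ∑' n : ℕ, (n:ℝ) * cc n * u ^ n := by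
    rw [SS, ← tsum_mul_left, Summable.tsum_eq_zero_add hm]
    simp only [Nat.cast_zero, zero_mul, zero_add]
    apply tsum_congr; intro n
    simp only [DD]
    push_cast
    ring
  rw [hZ, iteratedDeriv_four g0, deriv_SS g0,
    show (1:ℝ)/4 * u * SS (DD cc) u = 1/4 * (u * SS (DD cc) u) by ring, hmid]
  rw [show SS cc u = ∑' n, cc n * u ^ n from rfl,
    show SS (DD (DD (DD (DD cc)))) u = ∑' n, DD (DD (DD (DD cc))) n * u ^ n from rfl,
    ← tsum_mul_left, ← tsum_mul_left,
    ← Summable.tsum_sub hS4 (hm.mul_left (1/4)),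
    ← Summable.tsum_add ((hS4.sub (hm.mul_left (1/4)))) (hS0.mul_left (1/4))]
  have hzero : ∀ n : ℕ, DD (DD (DD (DD cc))) n * u ^ n - 1/4 * ((n:ℝ) * cc n * u ^ n)
      + 1/4 * (cc n * u ^ n) = 0 := by
    intro n
    have hD4 : DD (DD (DD (DD cc))) n
        = ((n:ℝ)+1) * ((n:ℝ)+2) * ((n:ℝ)+3) * ((n:ℝ)+4) * cc (n+4) := by
      simp only [DD]
      push_cast
      ring
    have h1 : ((n:ℝ)+1) ≠ 0 := by positivity
    have h2 : ((n:ℝ)+2) ≠ 0 := by positivity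
    have h3 : ((n:ℝ)+3) ≠ 0 := by positivity
    have h4 : ((n:ℝ)+4) ≠ 0 := by positivity
    rw [hD4, cc_add_four n]
    field_simp
    ring
  rw [tsum_congr hzero, tsum_zero]
end

section
/- Let m ∈ ℝ, B > 0, t > 0, x ≥ 0 and let r ≥ 1 be an integer. Then (2/π) ∫₀^∞ (−Bt)^r · (m/(2·r!)) · k^{6r−2} · e^{−Bk⁴t} · cos(kx) dk = (−1)^r · [ (m Γ(3r/2 − 1/4) / (4π (Bt)^{r/2 − 1/4} · r!)) · ₁F₃(3r/2 − 1/4; 1/4, 1/2, 3/4; x⁴/(256Bt)) − (m x² Γ(3r/2 + 1/4) / (8π (Bt)^{r/2 + 1/4} · r!)) · ₁F₃(3r/2 + 1/4; 3/4, 5/4, 3/2; x⁴/(256Bt)) ], the integrand being integrable on (0,∞). -/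
open MeasureTheory

section aux

lemma pow_eq_rpow_on {c : ℝ} (p : ℕ) : ∀ x : ℝ, x ∈ Set.Ioi (0:ℝ) →
    x ^ p * Real.exp (-c * x ^ 4) = x ^ (p : ℝ) * Real.exp (-c * x ^ (4:ℝ)) := by
  intro x hx
  rw [Real.rpow_natCast, show (4:ℝ) = ((4:ℕ):ℝ) by norm_num, Real.rpow_natCast]

lemma aux_integrable {c : ℝ} (hc : 0 < c) (p : ℕ) :
    IntegrableOn (fun k : ℝ => k ^ p * Real.exp (-c * k ^ 4)) (Set.Ioi 0) := by
  have hp : (-1:ℝ) < (p:ℝ) := by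
    have := Nat.cast_nonneg (α := ℝ) p; linarith
  have h := integrableOn_rpow_mul_exp_neg_mul_rpow (s := (p:ℝ)) (p := 4)
    hp (by norm_num) hc
  exact h.congr_fun (fun x hx => (pow_eq_rpow_on p x hx).symm) measurableSet_Ioi

lemma aux_integral {c : ℝ} (hc : 0 < c) (p : ℕ) :
    ∫ k in Set.Ioi (0:ℝ), k ^ p * Real.exp (-c * k ^ 4)
      = Real.Gamma (((p:ℝ) + 1) / 4) / (4 * c ^ (((p:ℝ) + 1) / 4)) := by
  have hp : (-1:ℝ) < (p:ℝ) := by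
    have := Nat.cast_nonneg (α := ℝ) p; linarith
  rw [setIntegral_congr_fun measurableSet_Ioi (pow_eq_rpow_on p),
    integral_rpow_mul_exp_neg_mul_rpow (by norm_num) hp hc,
    neg_div, Real.rpow_neg hc.le]
  have h1 : (c ^ (((p:ℝ)+1)/4)) ≠ 0 := by positivity
  rw [eq_div_iff (by positivity)]
  field_simp

lemma poch_zero (a : ℝ) : poch a 0 = 1 := by simp [poch]

lemma poch_succ (a : ℝ) (k : ℕ) : poch a (k + 1) = poch a k * (a + k) := by
  simp [poch, Finset.prod_range_succ]

lemma poch_pos {a : ℝ} (ha : 0 < a) (k : ℕ) : 0 < poch a k := by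
  induction k with
  | zero => simp [poch_zero]
  | succ n ih => rw [poch_succ]; positivity

lemma Gamma_poch {a : ℝ} (ha : 0 < a) (k : ℕ) :
    Real.Gamma (a + k) = Real.Gamma a * poch a k := by
  induction k with
  | zero => simp [poch_zero]
  | succ n ih =>
    have h1 : a + (n:ℝ) ≠ 0 := by positivity
    have : a + ((n+1 : ℕ):ℝ) = (a + n) + 1 := by push_cast; ring
    rw [this, Real.Gamma_add_one h1, ih, poch_succ]; ring

lemma fact_even (j : ℕ) : ((4*j).factorial : ℝ)
    = 256 ^ j * (j.factorial : ℝ) * poch (1/4) j * poch (1/2) j * poch (3/4) j := by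
  induction j with
  | zero => simp [poch_zero]
  | succ n ih =>
    have h : 4*(n+1) = (4*n+3)+1 := by ring
    rw [h, Nat.factorial_succ, show 4*n+3 = (4*n+2)+1 by ring, Nat.factorial_succ,
      show 4*n+2 = (4*n+1)+1 by ring, Nat.factorial_succ, show 4*n+1 = (4*n)+1 by rfl,
      Nat.factorial_succ]
    push_cast
    rw [ih, Nat.factorial_succ, poch_succ, poch_succ, poch_succ]
    push_cast
    ring

lemma fact_odd (j : ℕ) : ((4*j+2).factorial : ℝ)
    = 2 * 256 ^ j * (j.factorial : ℝ) * poch (3/4) j * poch (5/4) j * poch (3/2) j := by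
  induction j with
  | zero => simp [poch_zero]
  | succ n ih =>
    have h : 4*(n+1)+2 = (4*n+5)+1 := by ring
    rw [h, Nat.factorial_succ, show 4*n+5 = (4*n+4)+1 by ring, Nat.factorial_succ,
      show 4*n+4 = (4*n+3)+1 by ring, Nat.factorial_succ, show 4*n+3 = (4*n+2)+1 by ring,
      Nat.factorial_succ]
    push_cast
    rw [ih, Nat.factorial_succ, poch_succ, poch_succ, poch_succ]
    push_cast
    ring

lemma summable_hyper {a b₁ b₂ b₃ z : ℝ} (ha : 0 < a) (hb₁ : 0 < b₁) (hb₂ : 0 < b₂)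
    (hb₃ : 0 < b₃) (hz : 0 ≤ z) :
    Summable (fun j : ℕ =>
      poch a j / (poch b₁ j * poch b₂ j * poch b₃ j) * z ^ j / (j.factorial : ℝ)) := by
  set f : ℕ → ℝ := fun j =>
      poch a j / (poch b₁ j * poch b₂ j * poch b₃ j) * z ^ j / (j.factorial : ℝ) with hf
  have hfpos : ∀ j, 0 ≤ f j := by
    intro j
    have := poch_pos ha j; have := poch_pos hb₁ j; have := poch_pos hb₂ j
    have := poch_pos hb₃ j; have := Nat.factorial_pos j
    positivity
  have hrec : ∀ j : ℕ, f (j+1) = f j * ((a + j) * z / ((b₁+j)*(b₂+j)*(b₃+j)*(j+1))) := by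
    intro j
    have h1 := (poch_pos hb₁ j).ne'
    have h2 := (poch_pos hb₂ j).ne'
    have h3 := (poch_pos hb₃ j).ne'
    have h4 : ((j.factorial : ℝ)) ≠ 0 := by exact_mod_cast (Nat.factorial_pos j).ne'
    have hb1j : (b₁ + (j:ℝ)) ≠ 0 := by positivity
    have hb2j : (b₂ + (j:ℝ)) ≠ 0 := by positivity
    have hb3j : (b₃ + (j:ℝ)) ≠ 0 := by positivity
    have hj1 : ((j:ℝ) + 1) ≠ 0 := by positivity
    simp only [hf, poch_succ, Nat.factorial_succ, pow_succ]
    push_cast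
    field_simp
  apply summable_of_ratio_norm_eventually_le (r := 1/2) (by norm_num)
  have hN : ∀ᶠ j : ℕ in Filter.atTop, (a:ℝ) ≤ j ∧ 4 * z ≤ j ∧ 1 ≤ j := by
    have h1 := Filter.eventually_ge_atTop (⌈a⌉₊ + ⌈4*z⌉₊ + 1)
    filter_upwards [h1] with j hj
    have ha' : (⌈a⌉₊ : ℝ) ≤ j := by exact_mod_cast le_trans (by omega) hj
    have hz' : (⌈4*z⌉₊ : ℝ) ≤ j := by exact_mod_cast le_trans (by omega) hj
    refine ⟨le_trans (Nat.le_ceil a) ha', le_trans (Nat.le_ceil _) hz', by omega⟩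
  filter_upwards [hN] with j ⟨hja, hjz, hj1⟩
  rw [Real.norm_of_nonneg (hfpos _), Real.norm_of_nonneg (hfpos _), hrec]
  have hq : (a + j) * z / ((b₁+j)*(b₂+j)*(b₃+j)*(j+1)) ≤ 1/2 := by
    have hj1' : (1:ℝ) ≤ (j:ℝ) := by exact_mod_cast hj1
    have hj0 : (0:ℝ) < (j:ℝ) := by linarith
    have hdenpos : (0:ℝ) < (b₁+j)*(b₂+j)*(b₃+j)*((j:ℝ)+1) := by positivity
    rw [div_le_iff₀ hdenpos]
    have f1 : (a + (j:ℝ)) * z ≤ 2*(j:ℝ)*z := by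
      have : a + (j:ℝ) ≤ 2*(j:ℝ) := by linarith
      exact mul_le_mul_of_nonneg_right this hz
    have f2 : 2*(j:ℝ)*z ≤ (1/2)*((j:ℝ)*(j:ℝ)) := by nlinarith
    have f3 : (j:ℝ)*(j:ℝ) ≤ (j:ℝ)*(j:ℝ)*(j:ℝ)*(j:ℝ) := by
      nlinarith [mul_pos hj0 hj0,
        mul_le_mul_of_nonneg_left (mul_le_mul hj1' hj1' (by norm_num) hj0.le)
          (mul_pos hj0 hj0).le]
    have f4 : (j:ℝ)*(j:ℝ)*(j:ℝ)*(j:ℝ) ≤ (b₁+j)*(b₂+j)*(b₃+j)*((j:ℝ)+1) := by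
      gcongr <;> linarith
    linarith
  calc f j * ((a + j) * z / ((b₁+j)*(b₂+j)*(b₃+j)*(j+1))) ≤ f j * (1/2) :=
        mul_le_mul_of_nonneg_left hq (hfpos j)
    _ = 1/2 * f j := by ring

end aux

/-- Inverse Fourier cosine transform of the transformed `r`-th order outer correction term. -/
theorem inverse_fourier_cosine_of_outer_correction (m B : ℝ) (hB : 0 < B)
    (t : ℝ) (ht : 0 < t) (x : ℝ) (hx : 0 ≤ x) (r : ℕ) (hr : 1 ≤ r) :
    IntegrableOn
      (fun k : ℝ => (-(B * t)) ^ r * (m / (2 * (Nat.factorial r))) * k ^ (6 * r - 2) *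
        Real.exp (-B * k ^ 4 * t) * Real.cos (k * x)) (Set.Ioi 0) ∧
    (2 / Real.pi) * ∫ k in Set.Ioi (0 : ℝ),
        (-(B * t)) ^ r * (m / (2 * (Nat.factorial r))) * k ^ (6 * r - 2) *
          Real.exp (-B * k ^ 4 * t) * Real.cos (k * x)
      = (-1 : ℝ) ^ r *
          (m * Real.Gamma (3 * r / 2 - 1/4) /
              (4 * Real.pi * (B * t) ^ ((r : ℝ)/2 - 1/4) * (Nat.factorial r)) *
            F13 (3 * r / 2 - 1/4) (1/4) (1/2) (3/4) (x ^ 4 / (256 * B * t))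
          - m * x ^ 2 * Real.Gamma (3 * r / 2 + 1/4) /
              (8 * Real.pi * (B * t) ^ ((r : ℝ)/2 + 1/4) * (Nat.factorial r)) *
            F13 (3 * r / 2 + 1/4) (3/4) (5/4) (3/2) (x ^ 4 / (256 * B * t))) := by

  set c := B * t with hcdef
  have hc : 0 < c := mul_pos hB ht
  set s := 6 * r - 2 with hsdef
  have hscast : (s:ℝ) = 6 * (r:ℝ) - 2 := by
    rw [hsdef, Nat.cast_sub (by omega)]; push_cast; ring
  set d0 := 3 * (r:ℝ) / 2 - 1/4 with hd0
  set d1 := 3 * (r:ℝ) / 2 + 1/4 with hd1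
  have hr1 : (1:ℝ) ≤ (r:ℝ) := by exact_mod_cast hr
  have hd0pos : 0 < d0 := by rw [hd0]; linarith
  have hd1pos : 0 < d1 := by rw [hd1]; linarith
  set zz := x^4 / (256 * c) with hzz
  have hzznn : 0 ≤ zz := by rw [hzz]; positivity
  have harg : ∀ n : ℕ, ((((s + 2*n : ℕ)):ℝ) + 1)/4 = d0 + (n:ℝ)/2 := by
    intro n
    push_cast
    rw [hscast, hd0]; ring
  set g : ℕ → ℝ → ℝ := fun n k =>
    ((-1:ℝ)^n * x^(2*n) / ((2*n).factorial : ℝ)) * (k ^ (s + 2*n) * Real.exp (-c * k^4))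
    with hg
  have hgint : ∀ n, IntegrableOn (g n) (Set.Ioi 0) := fun n =>
    (aux_integrable hc (s + 2*n)).const_mul _
  set A : ℕ → ℝ := fun n =>
    x^(2*n) / ((2*n).factorial : ℝ) * (Real.Gamma (d0 + (n:ℝ)/2) / (4 * c ^ (d0 + (n:ℝ)/2)))
    with hA
  have hval : ∀ n, ∫ k in Set.Ioi (0:ℝ), g n k = (-1:ℝ)^n * A n := by
    intro n
    simp only [hg]
    rw [integral_const_mul, aux_integral hc, harg n]
    simp only [hA]
    ring
  have hnorm : ∀ n, ∫ k in Set.Ioi (0:ℝ), ‖g n k‖ = A n := by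
    intro n
    have he : ∀ k ∈ Set.Ioi (0:ℝ), ‖g n k‖
        = (x^(2*n) / ((2*n).factorial : ℝ)) * (k ^ (s+2*n) * Real.exp (-c*k^4)) := by
      intro k hk
      have hk0 : (0:ℝ) < k := hk
      simp only [hg]
      rw [Real.norm_eq_abs, abs_mul,
        abs_of_nonneg (by positivity : (0:ℝ) ≤ k ^ (s+2*n) * Real.exp (-c*k^4))]
      congr 1
      rw [abs_div, abs_mul, abs_pow, abs_neg, abs_one, one_pow, one_mul,
        abs_of_nonneg (pow_nonneg hx _),
        abs_of_nonneg (by positivity : (0:ℝ) ≤ ((2*n).factorial : ℝ))]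
    rw [setIntegral_congr_fun measurableSet_Ioi he, integral_const_mul, aux_integral hc,
      harg n]
  -- even and odd parts
  set SE : ℕ → ℝ := fun j =>
    poch d0 j / (poch (1/4) j * poch (1/2) j * poch (3/4) j) * zz^j / (j.factorial : ℝ)
    with hSE
  set SO : ℕ → ℝ := fun j =>
    poch d1 j / (poch (3/4) j * poch (5/4) j * poch (3/2) j) * zz^j / (j.factorial : ℝ)
    with hSO
  have hsumSE : Summable SE :=
    summable_hyper hd0pos (by norm_num) (by norm_num) (by norm_num) hzznn
  have hsumSO : Summable SO :=
    summable_hyper hd1pos (by norm_num) (by norm_num) (by norm_num) hzznn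
  have hAe : ∀ j, A (2*j) = (Real.Gamma d0 / (4 * c ^ d0)) * SE j := by
    intro j
    simp only [hA, hSE]
    have e1 : 2*(2*j) = 4*j := by ring
    have e2 : d0 + ((2*j:ℕ):ℝ)/2 = d0 + (j:ℝ) := by push_cast; ring
    rw [e1, e2, Gamma_poch hd0pos j, fact_even j,
      Real.rpow_add hc, Real.rpow_natCast, hzz]
    have p1 := (poch_pos (show (0:ℝ) < 1/4 by norm_num) j).ne'
    have p2 := (poch_pos (show (0:ℝ) < 1/2 by norm_num) j).ne'
    have p3 := (poch_pos (show (0:ℝ) < 3/4 by norm_num) j).ne'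
    have pf : ((j.factorial : ℝ)) ≠ 0 := by exact_mod_cast (Nat.factorial_pos j).ne'
    have pc : (c:ℝ) ^ d0 ≠ 0 := by positivity
    have pcj : (c:ℝ) ^ j ≠ 0 := by positivity
    have p256 : ((256:ℝ))^j ≠ 0 := by positivity
    field_simp
    have h1 : c^j * c⁻¹^j = 1 := by rw [← mul_pow, mul_inv_cancel₀ hc.ne', one_pow]
    have h2 : (1/256:ℝ)^j * 256^j = 1 := by rw [← mul_pow]; norm_num
    linear_combination (-(x^(j*4)*poch d0 j) * ((1/256:ℝ)^j * 256^j)) * h1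
      + (-(x^(j*4)*poch d0 j)) * h2
  have hAo : ∀ j, A (2*j+1) = (x^2 * Real.Gamma d1 / (8 * c ^ d1)) * SO j := by
    intro j
    simp only [hA, hSO]
    have e1 : 2*(2*j+1) = 4*j+2 := by ring
    have e2 : d0 + ((2*j+1:ℕ):ℝ)/2 = d1 + (j:ℝ) := by
      rw [hd0, hd1]; push_cast; ring
    rw [e1, e2, Gamma_poch hd1pos j, fact_odd j,
      Real.rpow_add hc, Real.rpow_natCast, hzz]
    have p1 := (poch_pos (show (0:ℝ) < 3/4 by norm_num) j).ne'
    have p2 := (poch_pos (show (0:ℝ) < 5/4 by norm_num) j).ne'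
    have p3 := (poch_pos (show (0:ℝ) < 3/2 by norm_num) j).ne'
    have pf : ((j.factorial : ℝ)) ≠ 0 := by exact_mod_cast (Nat.factorial_pos j).ne'
    have pc : (c:ℝ) ^ d1 ≠ 0 := by positivity
    have pcj : (c:ℝ) ^ j ≠ 0 := by positivity
    have p256 : ((256:ℝ))^j ≠ 0 := by positivity
    field_simp
    have h1 : c^j * c⁻¹^j = 1 := by rw [← mul_pow, mul_inv_cancel₀ hc.ne', one_pow]
    have h2 : (1/256:ℝ)^j * 256^j = 1 := by rw [← mul_pow]; norm_num
    linear_combination (-(x^2*x^(j*4)*poch d1 j*8) * ((1/256:ℝ)^j * 256^j)) * h1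
      + (-(x^2*x^(j*4)*poch d1 j*8)) * h2
  have hsumAe : Summable (fun j => A (2*j)) :=
    (hsumSE.mul_left _).congr fun j => (hAe j).symm
  have hsumAo : Summable (fun j => A (2*j+1)) :=
    (hsumSO.mul_left _).congr fun j => (hAo j).symm
  have hAsum : Summable A := (hsumAe.hasSum.even_add_odd hsumAo.hasSum).summable
  -- pointwise sum of the series of integrands
  have hpt : ∀ k:ℝ, (∑' n, g n k) = k^s * Real.exp (-c*k^4) * Real.cos (k*x) := by
    intro k
    have h := ((Real.hasSum_cos (k*x)).mul_left (k ^ s * Real.exp (-c * k^4))).tsum_eq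
    have h2 : (fun n => (k ^ s * Real.exp (-c*k^4)) * ((-1:ℝ)^n * (k*x)^(2*n) / ((2*n).factorial)))
        = fun n => g n k := by
      funext n
      simp only [hg]
      rw [mul_pow, pow_add]
      ring
    rw [h2] at h
    exact h
  -- swap integral and sum
  have hInorm : Summable (fun n => ∫ k in Set.Ioi (0:ℝ), ‖g n k‖) :=
    hAsum.congr fun n => (hnorm n).symm
  have hswap : (∑' n, ∫ k in Set.Ioi (0:ℝ), g n k)
      = ∫ k in Set.Ioi (0:ℝ), k^s * Real.exp (-c*k^4) * Real.cos (k*x) := by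
    rw [show (fun k:ℝ => k^s * Real.exp (-c*k^4) * Real.cos (k*x))
        = fun k => ∑' n, g n k from funext fun k => (hpt k).symm]
    exact integral_tsum_of_summable_integral_norm hgint hInorm
  -- evaluate the sum of integrals
  have hIe : ∀ j, (∫ k in Set.Ioi (0:ℝ), g (2*j) k)
      = (Real.Gamma d0 / (4 * c ^ d0)) * SE j := by
    intro j
    rw [hval, hAe, (Even.neg_one_pow ⟨j, by ring⟩ : ((-1:ℝ))^(2*j) = 1), one_mul]
  have hIo : ∀ j, (∫ k in Set.Ioi (0:ℝ), g (2*j+1) k)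
      = -((x^2 * Real.Gamma d1 / (8 * c ^ d1)) * SO j) := by
    intro j
    rw [hval, hAo, (Odd.neg_one_pow ⟨j, by ring⟩ : ((-1:ℝ))^(2*j+1) = -1)]
    ring
  have hsumIe : Summable (fun j => ∫ k in Set.Ioi (0:ℝ), g (2*j) k) :=
    (hsumSE.mul_left _).congr fun j => (hIe j).symm
  have hsumIo : Summable (fun j => ∫ k in Set.Ioi (0:ℝ), g (2*j+1) k) :=
    ((hsumSO.mul_left _).neg).congr fun j => (hIo j).symm
  have htsum : (∑' n, ∫ k in Set.Ioi (0:ℝ), g n k)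
      = (Real.Gamma d0 / (4 * c ^ d0)) * F13 d0 (1/4) (1/2) (3/4) zz
        - (x^2 * Real.Gamma d1 / (8 * c ^ d1)) * F13 d1 (3/4) (5/4) (3/2) zz := by
    rw [← tsum_even_add_odd (f := fun n => ∫ k in Set.Ioi (0:ℝ), g n k) hsumIe hsumIo, tsum_congr hIe, tsum_congr hIo,
      tsum_mul_left, tsum_neg, tsum_mul_left]
    have hF1 : (∑' j, SE j) = F13 d0 (1/4) (1/2) (3/4) zz := by
      simp only [hSE, F13]
    have hF2 : (∑' j, SO j) = F13 d1 (3/4) (5/4) (3/2) zz := by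
      simp only [hSO, F13]
    rw [hF1, hF2]
    ring
  have hIval : (∫ k in Set.Ioi (0:ℝ), k^s * Real.exp (-c*k^4) * Real.cos (k*x))
      = (Real.Gamma d0 / (4 * c ^ d0)) * F13 d0 (1/4) (1/2) (3/4) zz
        - (x^2 * Real.Gamma d1 / (8 * c ^ d1)) * F13 d1 (3/4) (5/4) (3/2) zz := by
    rw [← hswap, htsum]
  -- rewrite the original integrand
  have hfun : ∀ k:ℝ, (-c) ^ r * (m / (2 * ((Nat.factorial r : ℕ) : ℝ))) * k ^ s *
        Real.exp (-B * k ^ 4 * t) * Real.cos (k * x)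
      = ((-c) ^ r * (m / (2 * ((Nat.factorial r : ℕ) : ℝ)))) *
        (k^s * Real.exp (-c*k^4) * Real.cos (k*x)) := by
    intro k
    rw [show -B * k^4 * t = -c * k^4 by rw [hcdef]; ring]
    ring
  have hmain_int : IntegrableOn
      (fun k:ℝ => k^s * Real.exp (-c*k^4) * Real.cos (k*x)) (Set.Ioi 0) := by
    apply Integrable.mono' (aux_integrable hc s)
    · exact (Continuous.aestronglyMeasurable (by fun_prop)).restrict
    · filter_upwards [ae_restrict_mem measurableSet_Ioi] with k hk
      have hk0 : (0:ℝ) < k := hk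
      rw [Real.norm_eq_abs, abs_mul]
      calc |k^s * Real.exp (-c*k^4)| * |Real.cos (k*x)|
          ≤ |k^s * Real.exp (-c*k^4)| * 1 :=
            mul_le_mul_of_nonneg_left (Real.abs_cos_le_one _) (abs_nonneg _)
        _ = k^s * Real.exp (-c*k^4) := by
            rw [mul_one, abs_of_nonneg (by positivity)]
  constructor
  · exact MeasureTheory.IntegrableOn.congr_fun
      (hmain_int.const_mul ((-c) ^ r * (m / (2 * ((Nat.factorial r : ℕ) : ℝ)))))
      (fun k _ => (hfun k).symm) measurableSet_Ioi
  · rw [setIntegral_congr_fun measurableSet_Ioi (fun k _ => hfun k),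
      integral_const_mul, hIval]
    have hzz' : x^4/(256*B*t) = zz := by rw [hzz, hcdef]; ring
    rw [hzz']
    have hP : (0:ℝ) < c^r := pow_pos hc r
    have hu : (0:ℝ) < c ^ ((r:ℝ)/2 - 1/4) := Real.rpow_pos_of_pos hc _
    have hv : (0:ℝ) < c ^ ((r:ℝ)/2 + 1/4) := Real.rpow_pos_of_pos hc _
    have hw0 : (0:ℝ) < c ^ d0 := Real.rpow_pos_of_pos hc _
    have hw1 : (0:ℝ) < c ^ d1 := Real.rpow_pos_of_pos hc _
    have hm1 : c ^ ((r:ℝ)/2 - 1/4) * (c:ℝ)^r = c ^ d0 := by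
      rw [← Real.rpow_natCast c r, ← Real.rpow_add hc, hd0]
      congr 1
      ring
    have hm2 : c ^ ((r:ℝ)/2 + 1/4) * (c:ℝ)^r = c ^ d1 := by
      rw [← Real.rpow_natCast c r, ← Real.rpow_add hc, hd1]
      congr 1
      ring
    have hfac : ((Nat.factorial r : ℕ) : ℝ) ≠ 0 := by
      exact_mod_cast (Nat.factorial_pos r).ne'
    have hpi : Real.pi ≠ 0 := Real.pi_ne_zero
    rw [← hm1, ← hm2, neg_pow]
    field_simp
end
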